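/- Let v ∈ M_2^{⊗n} satisfy π̂_j(v) = 0 for all j = 1,...,n-1, where π̂_j applies the singlet functional π̂ to the j-th and (j+1)-st tensor factors. If additionally v is a K-eigenvector with eigenvalue q^{n-2ℓ}, then v is determined up to scalar: the space of such vectors is at most one-dimensional, and equals the weight-(n-2ℓ) space of the irreducible subrepresentation M_{n+1} generated by e_0⊗...⊗e_0. -/

import Mathlib

open Finset

noncomputable section

/-- The weight (number of `1`s) of a basis index of `M₂^{⊗n}`: here `M₂^{⊗n}` is modelled
concretely as functions `(Fin n → Fin 2) → ℂ` on the set of basis index tuples. -/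
def wt {n : ℕ} (g : Fin n → Fin 2) : ℕ := ∑ i, (g i : ℕ)

/-- The action of `K` on `M₂^{⊗n}`: `K.e_f = q^{n - 2·wt f}·e_f`. -/
def Kact (q : ℂ) (n : ℕ) (v : (Fin n → Fin 2) → ℂ) : (Fin n → Fin 2) → ℂ :=
  fun g => q ^ ((n : ℤ) - 2 * (wt g : ℤ)) * v g

/-- The action of `E` on `M₂^{⊗n}` via the iterated coproduct
`Δ⁽ⁿ⁾(E) = ∑ᵢ 1⊗⋯⊗1⊗E⊗K⊗⋯⊗K` (slot `0` rightmost). -/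
def Eact (q : ℂ) (n : ℕ) (v : (Fin n → Fin 2) → ℂ) : (Fin n → Fin 2) → ℂ :=
  fun g => ∑ i ∈ Finset.univ.filter (fun i => g i = 0),
    q ^ (∑ j ∈ Finset.univ.filter (fun j => j < i), ((1 : ℤ) - 2 * ((g j : ℕ) : ℤ))) *
      v (Function.update g i 1)

/-- The action of `F` on `M₂^{⊗n}` via `Δ⁽ⁿ⁾(F) = ∑ᵢ K⁻¹⊗⋯⊗K⁻¹⊗F⊗1⊗⋯⊗1`. -/
def Fdown (q : ℂ) (n : ℕ) (v : (Fin n → Fin 2) → ℂ) : (Fin n → Fin 2) → ℂ :=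
  fun g => ∑ i ∈ Finset.univ.filter (fun i => g i = 1),
    q ^ (-∑ j ∈ Finset.univ.filter (fun j => i < j), ((1 : ℤ) - 2 * ((g j : ℕ) : ℤ))) *
      v (Function.update g i 0)

/-- The highest weight vector `e₀ ⊗ ⋯ ⊗ e₀` of `M₂^{⊗n}`. -/
def delta0 (n : ℕ) : (Fin n → Fin 2) → ℂ := fun g => if g = fun _ => 0 then 1 else 0

/-- `θ_l^{(n)} = F^l.(e₀ ⊗ ⋯ ⊗ e₀)`, spanning the weight spaces of the irreducible
subrepresentation `M_{n+1} ⊂ M₂^{⊗n}` generated by `e₀ ⊗ ⋯ ⊗ e₀`. -/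
def theta (q : ℂ) (n l : ℕ) : (Fin n → Fin 2) → ℂ := (Fdown q n)^[l] (delta0 n)

/-- The condition `π̂_j(v) = 0`, where the singlet functional `π̂` is applied at the two
consecutive tensor slots `a` and `b` (with `b = a + 1`), using the values
`π̂(e₀⊗e₀) = π̂(e₁⊗e₁) = 0`, `π̂(e₀⊗e₁) = (q⁻¹-q)/[2]`, `π̂(e₁⊗e₀) = (1-q⁻²)/[2]`
(the left tensor factor is the higher slot `b`). -/
def PihatZero (q : ℂ) (n : ℕ) (a b : Fin n) (v : (Fin n → Fin 2) → ℂ) : Prop :=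
  ∀ g : Fin n → Fin 2,
    ((q⁻¹ - q) / (q + q⁻¹)) * v (Function.update (Function.update g b 0) a 1) +
      ((1 - q⁻¹ ^ 2) / (q + q⁻¹)) * v (Function.update (Function.update g b 1) a 0) = 0

namespace PihatAux

variable {n : ℕ}

lemma sum_coe_eq_card (g : Fin n → Fin 2) (s : Finset (Fin n)) :
    ∑ j ∈ s, ((g j : ℕ)) = (s.filter (fun j => g j = 1)).card := by
  rw [Finset.card_filter]
  refine Finset.sum_congr rfl fun j _ => ?_
  have : g j = 0 ∨ g j = 1 := by omega
  rcases this with h | h <;> simp [h]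

/-- weighted sum of positions of ones -/
def Nsum (g : Fin n → Fin 2) : ℕ := ∑ i, (g i : ℕ) * (i : ℕ)

/-- the candidate spanning vector of the solution space -/
def wvec (q : ℂ) (n ℓ : ℕ) : (Fin n → Fin 2) → ℂ :=
  fun g => if wt g = ℓ then q ^ Nsum g else 0

lemma wt_update (g : Fin n → Fin 2) (a : Fin n) (x : Fin 2) :
    wt (Function.update g a x) = (x : ℕ) + ∑ i ∈ univ.erase a, (g i : ℕ) := by
  have h : ∀ i, ((Function.update g a x i : Fin 2) : ℕ)
      = Function.update (fun i => ((g i : ℕ))) a (x : ℕ) i := by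
    intro i
    by_cases h : i = a
    · subst h; simp
    · simp [h]
  rw [wt, Finset.sum_congr rfl fun i _ => h i,
    Finset.sum_update_of_mem (mem_univ a)]
  simp only [Finset.erase_eq]

lemma Nsum_update (g : Fin n → Fin 2) (a : Fin n) (x : Fin 2) :
    Nsum (Function.update g a x)
      = (x : ℕ) * (a : ℕ) + ∑ i ∈ univ.erase a, (g i : ℕ) * (i : ℕ) := by
  have h : ∀ i, ((Function.update g a x i : Fin 2) : ℕ) * (i : ℕ)
      = Function.update (fun i => ((g i : ℕ) * (i : ℕ))) a ((x : ℕ) * (a : ℕ)) i := by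
    intro i
    by_cases h : i = a
    · subst h; simp
    · simp [h]
  rw [Nsum, Finset.sum_congr rfl fun i _ => h i,
    Finset.sum_update_of_mem (mem_univ a)]
  simp only [Finset.erase_eq]

lemma wt_update2 (g : Fin n → Fin 2) (a b : Fin n) (hab : a ≠ b) (x y : Fin 2) :
    wt (Function.update (Function.update g b y) a x)
      = (x : ℕ) + ((y : ℕ) + ∑ i ∈ (univ.erase a).erase b, (g i : ℕ)) := by
  rw [wt_update]
  congr 1
  have h : ∀ i, ((Function.update g b y i : Fin 2) : ℕ)
      = Function.update (fun i => ((g i : ℕ))) b (y : ℕ) i := by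
    intro i
    by_cases h : i = b
    · subst h; simp
    · simp [h]
  rw [Finset.sum_congr rfl fun i _ => h i,
    Finset.sum_update_of_mem (Finset.mem_erase.mpr ⟨Ne.symm hab, mem_univ b⟩)]
  simp only [Finset.erase_eq]

lemma Nsum_update2 (g : Fin n → Fin 2) (a b : Fin n) (hab : a ≠ b) (x y : Fin 2) :
    Nsum (Function.update (Function.update g b y) a x)
      = (x : ℕ) * (a : ℕ)
        + ((y : ℕ) * (b : ℕ) + ∑ i ∈ (univ.erase a).erase b, (g i : ℕ) * (i : ℕ)) := by
  rw [Nsum_update]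
  congr 1
  have h : ∀ i, ((Function.update g b y i : Fin 2) : ℕ) * (i : ℕ)
      = Function.update (fun i => ((g i : ℕ) * (i : ℕ))) b ((y : ℕ) * (b : ℕ)) i := by
    intro i
    by_cases h : i = b
    · subst h; simp
    · simp [h]
  rw [Finset.sum_congr rfl fun i _ => h i,
    Finset.sum_update_of_mem (Finset.mem_erase.mpr ⟨Ne.symm hab, mem_univ b⟩)]
  simp only [Finset.erase_eq]

/-- a vector with no adjacent (0,1) pattern is sorted: ones first. -/
lemma sorted_char (g : Fin n → Fin 2)
    (hno : ∀ a b : Fin n, (b : ℕ) = (a : ℕ) + 1 → ¬(g a = 0 ∧ g b = 1)) :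
    g = fun i : Fin n => if (i : ℕ) < wt g then (1 : Fin 2) else 0 := by
  have hz : ∀ m : ℕ, ∀ i j : Fin n, g i = 0 → (j : ℕ) = (i : ℕ) + m → g j = 0 := by
    intro m
    induction m with
    | zero =>
      intro i j h0 hj
      have : j = i := Fin.ext (by omega)
      rwa [this]
    | succ m ih =>
      intro i j h0 hj
      have hmlt : (i : ℕ) + m < n := by have := j.isLt; omega
      have hj' : g ⟨(i : ℕ) + m, hmlt⟩ = 0 := ih i _ h0 rfl
      have hno' := hno ⟨(i : ℕ) + m, hmlt⟩ j (by simp; omega)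
      have hcases : g j = 0 ∨ g j = 1 := by omega
      rcases hcases with h | h
      · exact h
      · exact absurd ⟨hj', h⟩ hno'
  have hz' : ∀ i j : Fin n, (i : ℕ) ≤ (j : ℕ) → g i = 0 → g j = 0 := fun i j hij h0 =>
    hz ((j : ℕ) - (i : ℕ)) i j h0 (by omega)
  have hcard : (univ.filter (fun i => g i = 1)).card = wt g := (sum_coe_eq_card g univ).symm
  funext i
  have hi2 : g i = 0 ∨ g i = 1 := by omega
  rcases hi2 with h | h
  · have hsub : (univ.filter (fun j => g j = 1)) ⊆ Finset.Iio i := by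
      intro j hj
      rw [Finset.mem_filter] at hj
      rw [Finset.mem_Iio]
      by_contra hlt
      push_neg at hlt
      have h0 : g j = 0 := hz' i j (by exact_mod_cast hlt) h
      rw [h0] at hj
      exact absurd hj.2 (by decide)
    have hle : wt g ≤ (i : ℕ) := by
      rw [← hcard]
      calc (univ.filter (fun j => g j = 1)).card ≤ (Finset.Iio i).card :=
            Finset.card_le_card hsub
        _ = (i : ℕ) := Fin.card_Iio i
    rw [h, if_neg (by omega)]
  · have hsub : Finset.Iic i ⊆ univ.filter (fun j => g j = 1) := by
      intro j hj
      rw [Finset.mem_Iic] at hj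
      rw [Finset.mem_filter]
      refine ⟨mem_univ j, ?_⟩
      have hcases : g j = 0 ∨ g j = 1 := by omega
      rcases hcases with h0 | h1
      · have hgi0 : g i = 0 := hz' j i (by exact_mod_cast hj) h0
        rw [hgi0] at h
        exact absurd h (by decide)
      · exact h1
    have hge : (i : ℕ) + 1 ≤ wt g := by
      rw [← hcard]
      calc (i : ℕ) + 1 = (Finset.Iic i).card := (Fin.card_Iic i).symm
        _ ≤ _ := Finset.card_le_card hsub
    rw [h, if_pos (by omega)]

section q
variable {q : ℂ}

lemma zpow_exp_eq_zero (hq : q ≠ 0) (hroot : ∀ n : ℕ, 0 < n → q ^ n ≠ 1)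
    {m : ℤ} (h : q ^ m = 1) : m = 0 := by
  by_contra hm
  rcases lt_trichotomy m 0 with hlt | heq | hgt
  · have h' : q ^ (-m) = 1 := by rw [zpow_neg, h, inv_one]
    have hnat : q ^ ((-m).toNat) = 1 := by
      rw [← zpow_natCast, Int.toNat_of_nonneg (by omega)]; exact h'
    exact hroot _ (by omega) hnat
  · exact hm heq
  · have hnat : q ^ (m.toNat) = 1 := by
      rw [← zpow_natCast, Int.toNat_of_nonneg (by omega)]; exact h
    exact hroot _ (by omega) hnat

lemma hd_ne (hq : q ≠ 0) (hroot : ∀ n : ℕ, 0 < n → q ^ n ≠ 1) : q + q⁻¹ ≠ 0 := by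
  intro h
  have h2 : q ^ 2 = -1 := by field_simp at h; linear_combination h
  have h4 : q ^ 4 = 1 := by
    have h' : q ^ 4 = (q ^ 2) ^ 2 := by ring
    rw [h', h2]; ring
  exact hroot 4 (by omega) h4

lemma c2_ne (hq : q ≠ 0) (hroot : ∀ n : ℕ, 0 < n → q ^ n ≠ 1) :
    (1 - q⁻¹ ^ 2) / (q + q⁻¹) ≠ 0 := by
  apply div_ne_zero _ (hd_ne hq hroot)
  intro h
  have h2 : q ^ 2 = 1 := by field_simp at h; linear_combination h
  exact hroot 2 (by omega) h2

lemma c1_eq (hq : q ≠ 0) :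
    (q⁻¹ - q) / (q + q⁻¹) = -(q * ((1 - q⁻¹ ^ 2) / (q + q⁻¹))) := by
  have hnum : q⁻¹ - q = -(q * (1 - q⁻¹ ^ 2)) := by field_simp; ring
  rw [hnum, mul_div_assoc', neg_div]

lemma c1_add_c2_mul (hq : q ≠ 0) :
    (q⁻¹ - q) / (q + q⁻¹) + (1 - q⁻¹ ^ 2) / (q + q⁻¹) * q = 0 := by
  rw [div_mul_eq_mul_div, ← add_div]
  have h : (q⁻¹ - q) + (1 - q⁻¹ ^ 2) * q = 0 := by field_simp; ring
  rw [h, zero_div]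

/-- extract the swap relation from `PihatZero`. -/
lemma swap_rel (hq : q ≠ 0) (hroot : ∀ n : ℕ, 0 < n → q ^ n ≠ 1)
    {v : (Fin n → Fin 2) → ℂ} {a b : Fin n}
    (hP : PihatZero q n a b v) {g : Fin n → Fin 2} (ha : g a = 0) (hb : g b = 1) :
    v g = q * v (Function.update (Function.update g b 0) a 1) := by
  have h := hP g
  have e2 : Function.update (Function.update g b 1) a 0 = g := by
    rw [show (1 : Fin 2) = g b from hb.symm, Function.update_eq_self,
      show (0 : Fin 2) = g a from ha.symm, Function.update_eq_self]
  rw [e2, c1_eq hq] at h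
  set X := v (Function.update (Function.update g b 0) a 1)
  have h2 : ((1 - q⁻¹ ^ 2) / (q + q⁻¹)) * (v g - q * X) = 0 := by linear_combination h
  rcases mul_eq_zero.mp h2 with h3 | h3
  · exact absurd h3 (c2_ne hq hroot)
  · linear_combination h3

/-- key uniqueness: a vector satisfying all the swap relations is, on each weight-ℓ
stratum, a fixed multiple of `q ^ Nsum g`. -/
lemma determined (hq : q ≠ 0) (hroot : ∀ n : ℕ, 0 < n → q ^ n ≠ 1)
    {v : (Fin n → Fin 2) → ℂ} {ℓ : ℕ}
    (hP : ∀ a b : Fin n, (b : ℕ) = (a : ℕ) + 1 → PihatZero q n a b v) :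
    ∀ g : Fin n → Fin 2, wt g = ℓ →
      v g = (v (fun i : Fin n => if (i : ℕ) < ℓ then (1 : Fin 2) else 0)
        * (q ^ Nsum (fun i : Fin n => if (i : ℕ) < ℓ then 1 else 0))⁻¹) * q ^ Nsum g := by
  suffices H : ∀ m : ℕ, ∀ g : Fin n → Fin 2, Nsum g = m → wt g = ℓ →
      v g = (v (fun i : Fin n => if (i : ℕ) < ℓ then (1 : Fin 2) else 0)
        * (q ^ Nsum (fun i : Fin n => if (i : ℕ) < ℓ then 1 else 0))⁻¹) * q ^ Nsum g by
    intro g hg; exact H (Nsum g) g rfl hg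
  intro m
  induction m using Nat.strong_induction_on with
  | _ m ih =>
    intro g hm hwt
    by_cases hex : ∃ a b : Fin n, (b : ℕ) = (a : ℕ) + 1 ∧ g a = 0 ∧ g b = 1
    · obtain ⟨a, b, hab, ha, hb⟩ := hex
      have hne : a ≠ b := fun h => by rw [h] at hab; omega
      have hgeq : g = Function.update (Function.update g b 1) a 0 := by
        rw [show (1 : Fin 2) = g b from hb.symm, Function.update_eq_self,
          show (0 : Fin 2) = g a from ha.symm, Function.update_eq_self]
      have e1 := wt_update2 g a b hne 1 0
      have e2 := wt_update2 g a b hne 0 1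
      rw [← hgeq] at e2
      have f1 := Nsum_update2 g a b hne 1 0
      have f2 := Nsum_update2 g a b hne 0 1
      rw [← hgeq] at f2
      simp only [Fin.val_zero, Fin.val_one] at e1 e2 f1 f2
      have hwt' : wt (Function.update (Function.update g b 0) a 1) = ℓ := by omega
      have hN : Nsum g = Nsum (Function.update (Function.update g b 0) a 1) + 1 := by omega
      have hrec := ih (Nsum (Function.update (Function.update g b 0) a 1)) (by omega)
        (Function.update (Function.update g b 0) a 1) rfl hwt'
      rw [swap_rel hq hroot (hP a b hab) ha hb, hrec, hN, pow_succ]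
      ring
    · push_neg at hex
      have hno : ∀ a b : Fin n, (b : ℕ) = (a : ℕ) + 1 → ¬(g a = 0 ∧ g b = 1) := by
        intro a b hab h
        exact absurd h.2 (hex a b hab h.1)
      have hgeq : g = fun i : Fin n => if (i : ℕ) < ℓ then (1 : Fin 2) else 0 := by
        rw [← hwt]; exact sorted_char g hno
      rw [← hgeq, inv_mul_cancel_right₀ (pow_ne_zero _ hq)]

/-- summing `q^(2·rank)` over the ones gives the geometric sum. -/
lemma sum_r (q : ℂ) (g : Fin n → Fin 2) :
    ∑ i ∈ univ.filter (fun i => g i = 1),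
        q ^ (2 * (univ.filter (fun j => i < j ∧ g j = 1)).card)
      = ∑ m ∈ Finset.range (wt g), q ^ (2 * m) := by
  have hmono : ∀ i ∈ univ.filter (fun i => g i = 1), ∀ i' ∈ univ.filter (fun i => g i = 1),
      i < i' → (univ.filter (fun j => i' < j ∧ g j = 1)).card
        < (univ.filter (fun j => i < j ∧ g j = 1)).card := by
    intro i hi i' hi' hlt
    have hsub : insert i' (univ.filter (fun j => i' < j ∧ g j = 1))
        ⊆ univ.filter (fun j => i < j ∧ g j = 1) := by
      intro j hj
      rcases Finset.mem_insert.mp hj with h | h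
      · subst h
        rw [Finset.mem_filter]
        exact ⟨mem_univ _, hlt, (Finset.mem_filter.mp hi').2⟩
      · rw [Finset.mem_filter] at h ⊢
        exact ⟨mem_univ _, lt_trans hlt h.2.1, h.2.2⟩
    have hnm : i' ∉ univ.filter (fun j => i' < j ∧ g j = 1) := by simp
    have hcle := Finset.card_le_card hsub
    rw [Finset.card_insert_of_notMem hnm] at hcle
    omega
  have hinj : ∀ i ∈ univ.filter (fun i => g i = 1), ∀ i' ∈ univ.filter (fun i => g i = 1),
      (univ.filter (fun j => i < j ∧ g j = 1)).card
        = (univ.filter (fun j => i' < j ∧ g j = 1)).card → i = i' := by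
    intro i hi i' hi' h
    by_contra hne
    rcases lt_or_gt_of_ne hne with hlt | hlt
    · exact absurd h (Nat.ne_of_gt (hmono i hi i' hi' hlt))
    · exact absurd h (Nat.ne_of_gt (hmono i' hi' i hi hlt)).symm
  have hwtcard : wt g = (univ.filter (fun i => g i = 1)).card := sum_coe_eq_card g univ
  have hmaps : ∀ i ∈ univ.filter (fun i => g i = 1),
      (univ.filter (fun j => i < j ∧ g j = 1)).card ∈ Finset.range (wt g) := by
    intro i hi
    rw [Finset.mem_range, hwtcard]
    have hsub2 : univ.filter (fun j => i < j ∧ g j = 1) ⊆ univ.filter (fun i => g i = 1) := by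
      intro j hj
      rw [Finset.mem_filter] at hj
      rw [Finset.mem_filter]
      exact ⟨mem_univ _, hj.2.2⟩
    apply Finset.card_lt_card
    rw [Finset.ssubset_iff_of_subset hsub2]
    exact ⟨i, hi, by simp⟩
  have himg : (univ.filter (fun i => g i = 1)).image
      (fun i => (univ.filter (fun j => i < j ∧ g j = 1)).card) = Finset.range (wt g) := by
    apply Finset.eq_of_subset_of_card_le
    · intro m hm
      obtain ⟨i, hi, rfl⟩ := Finset.mem_image.mp hm
      exact hmaps i hi
    · rw [Finset.card_range, Finset.card_image_of_injOn
        (fun i hi i' hi' h => hinj i (by simpa using hi) i' (by simpa using hi') h), hwtcard]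
  rw [← himg, Finset.sum_image hinj]

lemma Fdown_smul (q : ℂ) (n : ℕ) (c : ℂ) (v : (Fin n → Fin 2) → ℂ) :
    Fdown q n (c • v) = c • Fdown q n v := by
  funext g
  simp only [Fdown, Pi.smul_apply, smul_eq_mul, Finset.mul_sum]
  exact Finset.sum_congr rfl fun i _ => by ring

lemma Fdown_wvec (hq : q ≠ 0) (n l : ℕ) :
    Fdown q n (wvec q n l) =
      (q ^ ((1 : ℤ) - (n : ℤ)) * ∑ m ∈ Finset.range (l + 1), q ^ (2 * m)) • wvec q n (l + 1) := by
  funext g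
  simp only [Fdown, wvec, Pi.smul_apply, smul_eq_mul]
  by_cases hg : wt g = l + 1
  · rw [if_pos hg]
    have key : ∀ i ∈ univ.filter (fun i => g i = 1),
        q ^ (-(∑ j ∈ univ.filter (fun j => i < j), ((1 : ℤ) - 2 * ((g j : ℕ) : ℤ)))) *
          (if wt (Function.update g i 0) = l then (q : ℂ) ^ Nsum (Function.update g i 0) else 0)
        = (q ^ ((1 : ℤ) - (n : ℤ)) * q ^ (Nsum g)) *
            q ^ (2 * (univ.filter (fun j => i < j ∧ g j = 1)).card) := by
      intro i hi
      rw [Finset.mem_filter] at hi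
      have hgi := hi.2
      have hwtsplit : wt g = (g i : ℕ) + ∑ j ∈ univ.erase i, (g j : ℕ) :=
        (Finset.add_sum_erase _ _ (mem_univ i)).symm
      rw [hgi] at hwtsplit
      have hwtu : wt (Function.update g i 0) = l := by
        rw [wt_update]
        simp only [Fin.val_zero, Fin.val_one] at hwtsplit ⊢
        omega
      rw [if_pos hwtu]
      have hNsplit : Nsum g = (g i : ℕ) * (i : ℕ) + ∑ j ∈ univ.erase i, (g j : ℕ) * (j : ℕ) :=
        (Finset.add_sum_erase _ _ (mem_univ i)).symm
      rw [hgi] at hNsplit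
      have hNu : Nsum g = (i : ℕ) + Nsum (Function.update g i 0) := by
        rw [Nsum_update]
        simp only [Fin.val_zero, Fin.val_one, one_mul, zero_mul] at hNsplit ⊢
        omega
      have hfilter : univ.filter (fun j => i < j) = Finset.Ioi i := by
        ext j; simp [Finset.mem_Ioi]
      have hsum1 : ∑ j ∈ univ.filter (fun j => i < j), ((g j : ℕ) : ℤ)
          = ((univ.filter (fun j => i < j ∧ g j = 1)).card : ℤ) := by
        have hs := sum_coe_eq_card g (univ.filter (fun j => i < j))
        rw [Finset.filter_filter] at hs
        exact_mod_cast hs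
      have hexp : ∑ j ∈ univ.filter (fun j => i < j), ((1 : ℤ) - 2 * ((g j : ℕ) : ℤ))
          = ((n : ℤ) - 1 - ((i : ℕ) : ℤ))
            - 2 * ((univ.filter (fun j => i < j ∧ g j = 1)).card : ℤ) := by
        rw [Finset.sum_sub_distrib, Finset.sum_const, ← Finset.mul_sum, hsum1, hfilter,
          Fin.card_Ioi]
        simp only [nsmul_eq_mul, mul_one]
        have hin : (i : ℕ) < n := i.isLt
        omega
      rw [hexp]
      rw [show (q : ℂ) ^ Nsum (Function.update g i 0)
            = q ^ ((Nsum (Function.update g i 0) : ℤ)) from (zpow_natCast q _).symm,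
        show (q : ℂ) ^ (Nsum g) = q ^ ((Nsum g : ℤ)) from (zpow_natCast q _).symm,
        show (q : ℂ) ^ (2 * (univ.filter (fun j => i < j ∧ g j = 1)).card)
            = q ^ ((2 * (univ.filter (fun j => i < j ∧ g j = 1)).card : ℕ) : ℤ) from
          (zpow_natCast q _).symm,
        ← zpow_add₀ hq, ← zpow_add₀ hq, ← zpow_add₀ hq]
      congr 1
      push_cast
      omega
    rw [Finset.sum_congr rfl key, ← Finset.mul_sum, sum_r q g, hg]
    ring
  · rw [if_neg hg, mul_zero]
    apply Finset.sum_eq_zero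
    intro i hi
    rw [Finset.mem_filter] at hi
    have hwtsplit : wt g = (g i : ℕ) + ∑ j ∈ univ.erase i, (g j : ℕ) :=
      (Finset.add_sum_erase _ _ (mem_univ i)).symm
    rw [hi.2] at hwtsplit
    have hwtu : wt (Function.update g i 0) ≠ l := by
      rw [wt_update]
      simp only [Fin.val_zero, Fin.val_one] at hwtsplit ⊢
      omega
    rw [if_neg hwtu, mul_zero]

/-- explicit formula for `theta` as a nonzero multiple of `wvec`. -/
lemma theta_formula (hq : q ≠ 0) (hroot : ∀ n : ℕ, 0 < n → q ^ n ≠ 1) (n l : ℕ) :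
    ∃ c : ℂ, c ≠ 0 ∧ theta q n l = c • wvec q n l := by
  induction l with
  | zero =>
    refine ⟨1, one_ne_zero, ?_⟩
    funext g
    simp only [theta, Function.iterate_zero, id_eq, Pi.smul_apply, smul_eq_mul, one_mul,
      delta0, wvec]
    by_cases h : g = fun _ => 0
    · rw [if_pos h, if_pos (by subst h; simp [wt]), h]
      have : Nsum (fun _ : Fin n => (0 : Fin 2)) = 0 := by simp [Nsum]
      rw [this, pow_zero]
    · rw [if_neg h, if_neg ?_]
      intro hwt
      apply h
      funext i
      have hall := Finset.sum_eq_zero_iff.mp hwt i (mem_univ i)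
      omega
  | succ l ih =>
    obtain ⟨c, hc, hth⟩ := ih
    refine ⟨c * (q ^ ((1 : ℤ) - (n : ℤ)) * ∑ m ∈ Finset.range (l + 1), q ^ (2 * m)),
      ?_, ?_⟩
    · refine mul_ne_zero hc (mul_ne_zero (zpow_ne_zero _ hq) ?_)
      have h1 : (q : ℂ) ^ 2 ≠ 1 := hroot 2 (by omega)
      have hgeom : ∑ m ∈ Finset.range (l + 1), q ^ (2 * m)
          = ((q ^ 2) ^ (l + 1) - 1) / (q ^ 2 - 1) := by
        rw [← geom_sum_eq h1]
        exact Finset.sum_congr rfl fun m _ => by rw [pow_mul]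
      rw [hgeom]
      apply div_ne_zero
      · rw [← pow_mul, sub_ne_zero]
        exact hroot (2 * (l + 1)) (by omega)
      · exact sub_ne_zero.mpr h1
    · rw [theta, Function.iterate_succ_apply', ← theta, hth, Fdown_smul,
        Fdown_wvec hq, smul_smul]

end q
end PihatAux


open PihatAux in
/-- If `v ∈ M₂^{⊗n}` satisfies `π̂_j(v) = 0` for all `j = 1,…,n-1` and is a
`K`-eigenvector with eigenvalue `q^{n-2ℓ}`, then `v` is determined up to scalar: the space
of such vectors equals the weight-`(n-2ℓ)` space of the irreducible subrepresentation
`M_{n+1}` generated by `e₀ ⊗ ⋯ ⊗ e₀`, i.e. the span of `θ_ℓ = F^ℓ.(e₀⊗⋯⊗e₀)`;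
in particular it is at most one-dimensional. -/
theorem pihat_kernel_eq_weight_space (q : ℂ) (hq : q ≠ 0)
    (hroot : ∀ n : ℕ, 0 < n → q ^ n ≠ 1) (n ℓ : ℕ) (hℓ : ℓ ≤ n) :
    {v : (Fin n → Fin 2) → ℂ |
        Kact q n v = q ^ ((n : ℤ) - 2 * (ℓ : ℤ)) • v ∧
        ∀ a b : Fin n, (b : ℕ) = (a : ℕ) + 1 → PihatZero q n a b v} =
      (Submodule.span ℂ {theta q n ℓ} : Set ((Fin n → Fin 2) → ℂ)) := by
  classical
  obtain ⟨cθ, hcθ, hθ⟩ := PihatAux.theta_formula hq hroot n ℓ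
  have hwvec_mem : ∀ e : ℂ,
      Kact q n (e • PihatAux.wvec q n ℓ)
          = q ^ ((n : ℤ) - 2 * (ℓ : ℤ)) • (e • PihatAux.wvec q n ℓ) ∧
        ∀ a b : Fin n, (b : ℕ) = (a : ℕ) + 1 → PihatZero q n a b (e • PihatAux.wvec q n ℓ) := by
    intro e
    constructor
    · funext g
      simp only [Kact, Pi.smul_apply, smul_eq_mul, PihatAux.wvec]
      by_cases h : wt g = ℓ
      · rw [h]
      · rw [if_neg h]; ring
    · intro a b hab g
      have hne : a ≠ b := fun h => by rw [h] at hab; omega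
      have e1 := PihatAux.wt_update2 g a b hne 1 0
      have e2 := PihatAux.wt_update2 g a b hne 0 1
      have f1 := PihatAux.Nsum_update2 g a b hne 1 0
      have f2 := PihatAux.Nsum_update2 g a b hne 0 1
      simp only [Fin.val_zero, Fin.val_one] at e1 e2 f1 f2
      have hN12 : Nsum (Function.update (Function.update g b 1) a 0)
          = Nsum (Function.update (Function.update g b 0) a 1) + 1 := by omega
      simp only [Pi.smul_apply, smul_eq_mul, PihatAux.wvec]
      by_cases h : wt (Function.update (Function.update g b 0) a 1) = ℓ
      · rw [if_pos h, if_pos (by omega), hN12, pow_succ]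
        have hid := PihatAux.c1_add_c2_mul (q := q) hq
        linear_combination
          (e * q ^ Nsum (Function.update (Function.update g b 0) a 1)) * hid
      · rw [if_neg h, if_neg (by omega)]
        ring
  ext v
  simp only [Set.mem_setOf_eq, SetLike.mem_coe, Submodule.mem_span_singleton]
  constructor
  · rintro ⟨hK, hP⟩
    have hsupp : ∀ g : Fin n → Fin 2, wt g ≠ ℓ → v g = 0 := by
      intro g hg
      have h := congrFun hK g
      simp only [Kact, Pi.smul_apply, smul_eq_mul] at h
      by_contra hv
      have h' := mul_right_cancel₀ hv h
      have hz : q ^ (((n : ℤ) - 2 * (wt g : ℤ)) - ((n : ℤ) - 2 * (ℓ : ℤ))) = 1 := by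
        rw [zpow_sub₀ hq, h', div_self (zpow_ne_zero _ hq)]
      have hzero := PihatAux.zpow_exp_eq_zero hq hroot hz
      omega
    have hdet := PihatAux.determined (ℓ := ℓ) hq hroot hP
    refine ⟨(v (fun i : Fin n => if (i : ℕ) < ℓ then (1 : Fin 2) else 0)
        * (q ^ Nsum (fun i : Fin n => if (i : ℕ) < ℓ then 1 else 0))⁻¹) * cθ⁻¹, ?_⟩
    rw [hθ, smul_smul, mul_assoc, inv_mul_cancel₀ hcθ, mul_one]
    funext g
    simp only [Pi.smul_apply, smul_eq_mul, PihatAux.wvec]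
    by_cases h : wt g = ℓ
    · rw [if_pos h]
      exact (hdet g h).symm
    · rw [if_neg h, mul_zero]
      exact (hsupp g h).symm
  · rintro ⟨d, rfl⟩
    rw [hθ, smul_smul]
    exact hwvec_mem (d * cθ)


end
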